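/- Suppose α > 0, S_v > S_g > 0, and distances satisfy the triangle inequality d_ag ≤ d_av + d_gv. If a stealthy attack is feasible, i.e., d_av^α·S_v < d_ag^α·S_g, then d_av < d_gv / ((S_v/S_g)^(1/α) − 1). -/
import Mathlib


/-- If a stealthy attack is feasible then
`d_av < d_gv / ((S_v/S_g)^(1/α) − 1)`. -/
theorem stealthy_attack_range_bound
    (dav dag dgv Sv Sg α : ℝ)
    (hdav : 0 < dav) (hdag : 0 < dag) (hdgv : 0 < dgv)
    (hSg : 0 < Sg) (hSv : Sg < Sv) (hα : 0 < α)
    (htri : dag ≤ dav + dgv)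
    (hfeas : dav ^ α * Sv < dag ^ α * Sg) :
    dav < dgv / ((Sv / Sg) ^ (1 / α) - 1) := by
  set r : ℝ := (Sv / Sg) ^ (1 / α) with hr
  have hratio : (1 : ℝ) < Sv / Sg := (one_lt_div hSg).mpr hSv
  have hr1 : 1 < r := Real.one_lt_rpow_iff_of_pos (by linarith) |>.mpr
    (Or.inl ⟨hratio, by positivity⟩)
  -- dav^α * (Sv/Sg) < dag^α
  have h1 : dav ^ α * (Sv / Sg) < dag ^ α := by
    rw [← mul_div_assoc, div_lt_iff₀ hSg]
    exact hfeas
  -- take rpow (1/α)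
  have h2 : dav * r < dag := by
    have hmono : (dav ^ α * (Sv / Sg)) ^ (1 / α) < (dag ^ α) ^ (1 / α) := by
      apply Real.rpow_lt_rpow (by positivity) h1 (by positivity)
    rwa [Real.mul_rpow (by positivity) (by positivity),
      ← Real.rpow_mul hdav.le, ← Real.rpow_mul hdag.le,
      mul_one_div, div_self hα.ne', Real.rpow_one, Real.rpow_one] at hmono
  have h3 : dav * (r - 1) < dgv := by nlinarith
  rw [lt_div_iff₀ (by linarith)]
  linarith [h3]
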